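/- Let G act vertex-primitively and arc-transitively on a connectivity-one digraph Γ, and let Λ be a lobe of Γ with at least three vertices. Then the group of automorphisms of Λ induced by the setwise stabiliser G_{Λ} acts primitively on the vertex set of Λ. -/

import Mathlib

open Pointwise

section DigraphBasics

variable {V : Type*}

/-- Adjacency in a digraph given by its arc relation. -/
def DigraphAdj (A : V → V → Prop) (u v : V) : Prop := A u v ∨ A v u

/-- The subdigraph induced on the set `S` is connected. -/
def ConnOn (A : V → V → Prop) (S : Set V) : Prop :=
  ∀ u ∈ S, ∀ v ∈ S,
    Relation.ReflTransGen (fun x y => DigraphAdj A x y ∧ x ∈ S ∧ y ∈ S) u v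

/-- A vertex whose removal disconnects the digraph. -/
def IsCutVertex (A : V → V → Prop) (v : V) : Prop := ¬ ConnOn A {v}ᶜ

/-- A digraph has connectivity one if it is connected and the removal of some
single vertex disconnects it. -/
def ConnectivityOne (A : V → V → Prop) : Prop :=
  ConnOn A Set.univ ∧ ∃ v : V, IsCutVertex A v

/-- The set `S` induces a subdigraph of connectivity strictly greater than one:
it is connected, has at least two vertices, and no single vertex disconnects it. -/
def TwoConnOn (A : V → V → Prop) (S : Set V) : Prop :=
  S.Nontrivial ∧ ConnOn A S ∧ ∀ w ∈ S, ConnOn A (S \ {w})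

/-- A lobe of a digraph: a maximal set of vertices inducing a connected subdigraph
of connectivity strictly greater than one. -/
def IsLobe (A : V → V → Prop) (Λ : Set V) : Prop :=
  TwoConnOn A Λ ∧ ∀ Λ' : Set V, TwoConnOn A Λ' → Λ ⊆ Λ' → Λ' = Λ

/-- `r` restricts to an equivalence relation on `S`. -/
def IsEquivRelOn (S : Set V) (r : V → V → Prop) : Prop :=
  (∀ u ∈ S, r u u) ∧ (∀ u ∈ S, ∀ v ∈ S, r u v → r v u) ∧
  (∀ u ∈ S, ∀ v ∈ S, ∀ w ∈ S, r u v → r v w → r u w)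

/-- The subgroup `H` acts transitively on the set `S`. -/
def TransitiveOn {G : Type*} [Group G] [MulAction G V] (H : Subgroup G) (S : Set V) : Prop :=
  ∀ u ∈ S, ∀ v ∈ S, ∃ h ∈ H, h • u = v

/-- The subgroup `H` acts primitively on the set `S`: transitively, and every
`H`-invariant equivalence relation on `S` is trivial or universal. -/
def PrimitiveOn {G : Type*} [Group G] [MulAction G V] (H : Subgroup G) (S : Set V) : Prop :=
  TransitiveOn H S ∧
  ∀ r : V → V → Prop, IsEquivRelOn S r →
    (∀ h ∈ H, ∀ u ∈ S, ∀ v ∈ S, r u v → r (h • u) (h • v)) →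
    (∀ u ∈ S, ∀ v ∈ S, r u v → u = v) ∨ (∀ u ∈ S, ∀ v ∈ S, r u v)

/-- The subgroup `H` acts regularly on the set `S`: transitively, with
point stabilisers acting trivially on `S`. -/
def RegularOn {G : Type*} [Group G] [MulAction G V] (H : Subgroup G) (S : Set V) : Prop :=
  TransitiveOn H S ∧ ∀ h ∈ H, ∀ v ∈ S, h • v = v → ∀ w ∈ S, h • w = w

end DigraphBasics

section Aux
open Relation
variable {V : Type*}

/-- The step relation used in `ConnOn`. -/
def Stp (A : V → V → Prop) (S : Set V) (x y : V) : Prop :=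
  DigraphAdj A x y ∧ x ∈ S ∧ y ∈ S

lemma connOn_def {A : V → V → Prop} {S : Set V} :
    ConnOn A S ↔ ∀ u ∈ S, ∀ v ∈ S, ReflTransGen (Stp A S) u v := Iff.rfl

lemma digraphAdj_symm {A : V → V → Prop} {x y : V} (h : DigraphAdj A x y) :
    DigraphAdj A y x := h.elim Or.inr Or.inl

lemma stp_symm {A : V → V → Prop} {S : Set V} : Symmetric (Stp A S) :=
  fun _ _ ⟨h, hx, hy⟩ => ⟨digraphAdj_symm h, hy, hx⟩

lemma chain_symm {A : V → V → Prop} {S : Set V} {u v : V}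
    (h : ReflTransGen (Stp A S) u v) : ReflTransGen (Stp A S) v u :=
  by haveI : Std.Symm (Stp A S) := ⟨fun _ _ h => stp_symm h⟩; exact Std.Symm.symm _ _ h

lemma chain_mono {A : V → V → Prop} {S T : Set V} (hST : S ⊆ T) {u v : V}
    (h : ReflTransGen (Stp A S) u v) : ReflTransGen (Stp A T) u v :=
  ReflTransGen.mono (fun _ _ ⟨h, hx, hy⟩ => ⟨h, hST hx, hST hy⟩) _ _ h

lemma connOn_union {A : V → V → Prop} {S T : Set V} {p : V}
    (hS : ConnOn A S) (hT : ConnOn A T) (hpS : p ∈ S) (hpT : p ∈ T) :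
    ConnOn A (S ∪ T) := by
  rw [connOn_def] at *
  have reach : ∀ x ∈ S ∪ T, ReflTransGen (Stp A (S ∪ T)) x p := by
    rintro x (hx | hx)
    · exact chain_mono Set.subset_union_left (hS x hx p hpS)
    · exact chain_mono Set.subset_union_right (hT x hx p hpT)
  intro u hu v hv
  exact (reach u hu).trans (chain_symm (reach v hv))

lemma connOn_sdiff_of_twoConn {A : V → V → Prop} {S : Set V}
    (hS : TwoConnOn A S) (w : V) : ConnOn A (S \ {w}) := by
  by_cases hw : w ∈ S
  · exact hS.2.2 w hw
  · rw [Set.diff_singleton_eq_self hw]; exact hS.2.1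

lemma twoConn_union {A : V → V → Prop} {S T : Set V} {x y : V}
    (hS : TwoConnOn A S) (hT : TwoConnOn A T)
    (hxS : x ∈ S) (hxT : x ∈ T) (hyS : y ∈ S) (hyT : y ∈ T) (hxy : x ≠ y) :
    TwoConnOn A (S ∪ T) := by
  refine ⟨hS.1.mono Set.subset_union_left, connOn_union hS.2.1 hT.2.1 hxS hxT, ?_⟩
  intro w _
  rw [Set.union_diff_distrib]
  rcases eq_or_ne x w with rfl | hxw
  · exact connOn_union (connOn_sdiff_of_twoConn hS x) (connOn_sdiff_of_twoConn hT x)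
      ⟨hyS, hxy.symm⟩ ⟨hyT, hxy.symm⟩
  · exact connOn_union (connOn_sdiff_of_twoConn hS w) (connOn_sdiff_of_twoConn hT w)
      ⟨hxS, hxw⟩ ⟨hxT, hxw⟩

lemma lobe_eq_of_two_mem {A : V → V → Prop} {L₁ L₂ : Set V} {x y : V}
    (h₁ : IsLobe A L₁) (h₂ : IsLobe A L₂)
    (hx₁ : x ∈ L₁) (hx₂ : x ∈ L₂) (hy₁ : y ∈ L₁) (hy₂ : y ∈ L₂) (hxy : x ≠ y) :
    L₁ = L₂ := by
  have hu := twoConn_union h₁.1 h₂.1 hx₁ hx₂ hy₁ hy₂ hxy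
  have e1 : L₁ ∪ L₂ = L₁ := h₁.2 _ hu Set.subset_union_left
  have e2 : L₁ ∪ L₂ = L₂ := h₂.2 _ hu Set.subset_union_right
  rw [← e1, e2]

end Aux

section Aux2
open Relation
variable {V : Type*} {G : Type*} [Group G] [MulAction G V]
variable {A : V → V → Prop}

lemma adj_smul (hA : ∀ (g : G) (u v : V), A u v ↔ A (g • u) (g • v))
    (g : G) {u v : V} (h : DigraphAdj A u v) : DigraphAdj A (g • u) (g • v) :=
  h.imp ((hA g u v).mp) ((hA g v u).mp)

lemma connOn_smul (hA : ∀ (g : G) (u v : V), A u v ↔ A (g • u) (g • v))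
    (g : G) {S : Set V} (hS : ConnOn A S) : ConnOn A (g • S) := by
  rw [connOn_def] at *
  rintro u hu v hv
  obtain ⟨u₀, hu₀, rfl⟩ := hu
  obtain ⟨v₀, hv₀, rfl⟩ := hv
  refine ReflTransGen.lift (fun x => g • x) ?_ _ _ (hS u₀ hu₀ v₀ hv₀)
  rintro a b ⟨hab, haS, hbS⟩
  exact ⟨adj_smul hA g hab, Set.smul_mem_smul_set haS, Set.smul_mem_smul_set hbS⟩

lemma twoConn_smul (hA : ∀ (g : G) (u v : V), A u v ↔ A (g • u) (g • v))
    (g : G) {S : Set V} (hS : TwoConnOn A S) : TwoConnOn A (g • S) := by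
  obtain ⟨hnt, hc, hr⟩ := hS
  refine ⟨?_, connOn_smul hA g hc, ?_⟩
  · obtain ⟨a, ha, b, hb, hab⟩ := hnt
    exact ⟨g • a, Set.smul_mem_smul_set ha, g • b, Set.smul_mem_smul_set hb,
      fun h => hab (smul_left_cancel g h)⟩
  · rintro w hw
    obtain ⟨w₀, hw₀, rfl⟩ := hw
    have : g • S \ {g • w₀} = g • (S \ {w₀}) := by
      rw [Set.smul_set_sdiff, Set.smul_set_singleton]
    rw [this]
    exact connOn_smul hA g (hr w₀ hw₀)

lemma lobe_smul (hA : ∀ (g : G) (u v : V), A u v ↔ A (g • u) (g • v))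
    (g : G) {S : Set V} (hS : IsLobe A S) : IsLobe A (g • S) := by
  refine ⟨twoConn_smul hA g hS.1, ?_⟩
  intro T hT hsub
  have h1 : S ⊆ g⁻¹ • T := by
    intro x hx
    rw [Set.mem_smul_set_iff_inv_smul_mem, inv_inv]
    exact hsub (Set.smul_mem_smul_set hx)
  have h2 : g⁻¹ • T = S := hS.2 _ (twoConn_smul hA g⁻¹ hT) h1
  calc T = g • (g⁻¹ • T) := by rw [smul_inv_smul]
    _ = g • S := by rw [h2]

end Aux2
section Aux3
open Relation SimpleGraph
variable {V : Type*}

/-- The underlying simple graph of the digraph. -/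
def SGr (A : V → V → Prop) : SimpleGraph V := SimpleGraph.fromRel (DigraphAdj A)

lemma sgr_adj {A : V → V → Prop} {x y : V} :
    (SGr A).Adj x y ↔ x ≠ y ∧ DigraphAdj A x y := by
  rw [SGr, SimpleGraph.fromRel_adj]
  constructor
  · rintro ⟨h, h2 | h2⟩
    · exact ⟨h, h2⟩
    · exact ⟨h, digraphAdj_symm h2⟩
  · rintro ⟨h, h2⟩
    exact ⟨h, Or.inl h2⟩

lemma chain_of_walk {A : V → V → Prop} {S : Set V} {u v : V}
    (w : (SGr A).Walk u v) (hw : ∀ x ∈ w.support, x ∈ S) :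
    ReflTransGen (Stp A S) u v := by
  induction w with
  | nil => exact ReflTransGen.refl
  | @cons a b c h p ih =>
    refine ReflTransGen.head ⟨(sgr_adj.mp h).2, ?_, ?_⟩ (ih ?_)
    · exact hw a (by simp [Walk.support_cons])
    · exact hw b (by simp [Walk.support_cons, p.start_mem_support])
    · intro x hx; exact hw x (by simp [Walk.support_cons, hx])

lemma walk_of_chain {A : V → V → Prop} {S : Set V} {u v : V}
    (hu : u ∈ S) (h : ReflTransGen (Stp A S) u v) :
    ∃ w : (SGr A).Walk u v, ∀ x ∈ w.support, x ∈ S := by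
  induction h with
  | refl => exact ⟨Walk.nil, by simpa using hu⟩
  | @tail b c hab hbc ih =>
    obtain ⟨w, hw⟩ := ih
    rcases eq_or_ne b c with rfl | hne
    · exact ⟨w, hw⟩
    · refine ⟨w.concat (sgr_adj.mpr ⟨hne, hbc.1⟩), ?_⟩
      intro x hx
      rw [Walk.support_concat, List.mem_append] at hx
      rcases hx with hx | hx
      · exact hw x hx
      · simp at hx; subst hx; exact hbc.2.2

lemma exists_firstHit {A : V → V → Prop} {Λ : Set V} {z c : V}
    (w : (SGr A).Walk z c) (hc : c ∈ Λ) :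
    ∃ a ∈ Λ, ∃ w' : (SGr A).Walk z a, ∀ x ∈ w'.support, x ∈ Λ → x = a := by
  induction w with
  | nil => exact ⟨_, hc, Walk.nil, by simp⟩
  | @cons a b d h p ih =>
    by_cases ha : a ∈ Λ
    · exact ⟨a, ha, Walk.nil, by simp⟩
    · obtain ⟨e, he, w', hw'⟩ := ih hc
      refine ⟨e, he, Walk.cons h w', ?_⟩
      intro x hx hxΛ
      rw [Walk.support_cons, List.mem_cons] at hx
      rcases hx with rfl | hx
      · exact absurd hxΛ ha
      · exact hw' x hx hxΛ

/-- The set of possible "gates" of `z` into `Λ`. -/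
def gateSet (A : V → V → Prop) (Λ : Set V) (z : V) : Set V :=
  {a | a ∈ Λ ∧ ∃ w : (SGr A).Walk z a, ∀ x ∈ w.support, x ∈ Λ → x = a}

lemma gateSet_nonempty {A : V → V → Prop} {Λ : Set V}
    (hconn : ConnOn A Set.univ) (hne : Λ.Nonempty) (z : V) :
    (gateSet A Λ z).Nonempty := by
  obtain ⟨c, hc⟩ := hne
  have hchain : ReflTransGen (Stp A Set.univ) z c :=
    (connOn_def.mp hconn) z (Set.mem_univ z) c (Set.mem_univ c)
  obtain ⟨w, -⟩ := walk_of_chain (Set.mem_univ z) hchain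
  obtain ⟨a, ha, w', hw'⟩ := exists_firstHit w hc
  exact ⟨a, ha, w', hw'⟩

end Aux3
section Aux4
open Relation SimpleGraph
variable {V : Type*}

lemma ear_twoConn {A : V → V → Prop} {Λ : Set V} (hL : TwoConnOn A Λ)
    {a b : V} (ha : a ∈ Λ) (hb : b ∈ Λ)
    (q : (SGr A).Walk a b) (hq : q.IsPath) :
    TwoConnOn A (Λ ∪ {x | x ∈ q.support}) := by
  classical
  set U := Λ ∪ {x | x ∈ q.support} with hU
  have hΛU : Λ ⊆ U := Set.subset_union_left
  have hqU : ∀ x ∈ q.support, x ∈ U := fun x hx => Or.inr hx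
  have key : ∀ (W : Set V), W.Subsingleton → ∀ u ∈ U \ W,
      ∃ e, e ∈ Λ \ W ∧ ReflTransGen (Stp A (U \ W)) u e := by
    intro W hW u hu
    obtain ⟨huU, huW⟩ := hu
    by_cases huΛ : u ∈ Λ
    · exact ⟨u, ⟨huΛ, huW⟩, ReflTransGen.refl⟩
    · have hu' : u ∈ q.support := huU.resolve_left huΛ
      have hnd : ((q.takeUntil u hu').support ++ (q.dropUntil u hu').support.tail).Nodup := by
        rw [← Walk.support_append, Walk.take_spec]; exact hq.support_nodup
      have hdisj := List.disjoint_of_nodup_append hnd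
      by_cases hw2 : ∃ w ∈ W, w ∈ (q.dropUntil u hu').support
      · obtain ⟨w, hwW, hw2⟩ := hw2
        have hwq1 : w ∉ (q.takeUntil u hu').support := by
          intro hcon
          have h0 : w = u ∨ w ∈ (q.dropUntil u hu').support.tail := by
            have h1 := hw2
            rw [Walk.support_eq_cons] at h1
            exact List.mem_cons.mp h1
          rcases h0 with rfl | htail
          · exact huW hwW
          · exact hdisj hcon htail
        refine ⟨a, ⟨ha, ?_⟩, chain_of_walk (q.takeUntil u hu').reverse ?_⟩
        · intro haW
          exact hwq1 ((hW haW hwW) ▸ (q.takeUntil u hu').start_mem_support)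
        · intro x hx
          rw [Walk.support_reverse, List.mem_reverse] at hx
          refine ⟨hqU x (Walk.support_takeUntil_subset _ _ hx), ?_⟩
          intro hxW; exact hwq1 ((hW hxW hwW) ▸ hx)
      · push_neg at hw2
        refine ⟨b, ⟨hb, fun hbW => hw2 b hbW (q.dropUntil u hu').end_mem_support⟩,
          chain_of_walk (q.dropUntil u hu') ?_⟩
        intro x hx
        exact ⟨hqU x (Walk.support_dropUntil_subset _ _ hx), fun hxW => hw2 x hxW hx⟩
  have conn : ∀ (W : Set V), W.Subsingleton → ConnOn A (U \ W) := by
    intro W hW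
    have hmid : ConnOn A (Λ \ W) := by
      rcases hW.eq_empty_or_singleton with rfl | ⟨w, rfl⟩
      · simpa using hL.2.1
      · exact connOn_sdiff_of_twoConn hL w
    rw [connOn_def]
    intro u hu v hv
    obtain ⟨eu, heu, hcu⟩ := key W hW u hu
    obtain ⟨ev, hev, hcv⟩ := key W hW v hv
    have hΛsub : Λ \ W ⊆ U \ W := fun x hx => ⟨hΛU hx.1, hx.2⟩
    exact hcu.trans ((chain_mono hΛsub ((connOn_def.mp hmid) eu heu ev hev)).trans
      (chain_symm hcv))
  refine ⟨hL.1.mono hΛU, ?_, ?_⟩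
  · have h := conn ∅ Set.subsingleton_empty
    simpa using h
  · intro w _
    exact conn {w} Set.subsingleton_singleton

end Aux4
section Aux5
open Relation SimpleGraph
variable {V : Type*}

lemma gate_unique {A : V → V → Prop} {Λ : Set V} (hΛ : IsLobe A Λ)
    {z a₁ a₂ : V} (h1 : a₁ ∈ gateSet A Λ z) (h2 : a₂ ∈ gateSet A Λ z) :
    a₁ = a₂ := by
  classical
  by_contra hne
  obtain ⟨ha₁, w₁, hw₁⟩ := h1
  obtain ⟨ha₂, w₂, hw₂⟩ := h2
  have main : ∀ (q : (SGr A).Walk a₁ a₂), q.IsPath →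
      (∀ x ∈ q.support, x ∈ Λ → x = a₁ ∨ x = a₂) →
      (∀ e ∈ q.edges, e ∈ (w₁.reverse.append w₂).edges) → False := by
    intro q hq hsupq hedq
    cases q with
    | nil => exact hne rfl
    | @cons _ y _ h p =>
      cases p with
      | nil =>
        have he : s(a₁, a₂) ∈ (w₁.reverse.append w₂).edges :=
          hedq _ (by simp [Walk.edges_cons])
        rw [Walk.edges_append, List.mem_append, Walk.edges_reverse, List.mem_reverse] at he
        rcases he with he | he
        · exact hne (hw₁ a₂ (Walk.snd_mem_support_of_mem_edges w₁ he) ha₂).symm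
        · exact hne (hw₂ a₁ (Walk.fst_mem_support_of_mem_edges w₂ he) ha₁)
      | @cons _ y' _ h' p' =>
        have hy_mem : y ∈ (Walk.cons h (Walk.cons h' p')).support := by
          simp [Walk.support_cons]
        have hq1 := (Walk.cons_isPath_iff h _).mp hq
        have hya₁ : y ≠ a₁ := by
          intro hcon
          exact hq1.2 (hcon ▸ (Walk.cons h' p').start_mem_support)
        have hya₂ : y ≠ a₂ := by
          intro hcon
          have := (Walk.cons_isPath_iff h' p').mp hq1.1
          exact this.2 (hcon ▸ p'.end_mem_support)
        have hyΛ : y ∉ Λ := by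
          intro hcon
          rcases hsupq y hy_mem hcon with h | h
          · exact hya₁ h
          · exact hya₂ h
        have hear := ear_twoConn hΛ.1 ha₁ ha₂ (Walk.cons h (Walk.cons h' p')) hq
        have heq := hΛ.2 _ hear Set.subset_union_left
        exact hyΛ (heq ▸ (Or.inr hy_mem : y ∈ Λ ∪ {x | x ∈ (Walk.cons h (Walk.cons h' p')).support}))
  set w := w₁.reverse.append w₂ with hwdef
  have hsupw : ∀ x ∈ w.support, x ∈ Λ → x = a₁ ∨ x = a₂ := by
    intro x hx hxΛ
    rw [hwdef, Walk.mem_support_append_iff] at hx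
    rcases hx with hx | hx
    · rw [Walk.support_reverse, List.mem_reverse] at hx
      exact Or.inl (hw₁ x hx hxΛ)
    · exact Or.inr (hw₂ x hx hxΛ)
  exact main w.bypass w.bypass_isPath
    (fun x hx hxΛ => hsupw x (w.support_bypass_subset hx) hxΛ)
    (fun e he => w.edges_bypass_subset he)

end Aux5
section Aux6
open Relation SimpleGraph
variable {V : Type*} {G : Type*} [Group G] [MulAction G V]

lemma master_lemma {A : V → V → Prop}
    (hA : ∀ (g : G) (u v : V), A u v ↔ A (g • u) (g • v))
    (hvprim : PrimitiveOn (⊤ : Subgroup G) (Set.univ : Set V))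
    (hconn : ConnOn A Set.univ)
    {Λ : Set V} (hΛ : IsLobe A Λ)
    (rel : V → V → Prop)
    (hrel : IsEquivRelOn Λ rel)
    (hinv : ∀ h ∈ MulAction.stabilizer G Λ, ∀ u ∈ Λ, ∀ v ∈ Λ, rel u v → rel (h • u) (h • v))
    (hnt : ∃ u ∈ Λ, ∃ v ∈ Λ, u ≠ v ∧ rel u v) :
    ∀ u ∈ Λ, ∀ v ∈ Λ, rel u v := by
  classical
  have hΛne : Λ.Nonempty := hΛ.1.1.nonempty
  set r : V → V → Prop :=
    fun x y => x = y ∨ ∃ g : G, x ∈ g • Λ ∧ y ∈ g • Λ ∧ rel (g⁻¹ • x) (g⁻¹ • y) with hrdef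
  have hgne : ∀ z, (gateSet A Λ z).Nonempty := gateSet_nonempty hconn hΛne
  set π : V → V := fun z => (hgne z).choose with hπdef
  have hπmem : ∀ z, π z ∈ gateSet A Λ z := fun z => (hgne z).choose_spec
  have hπΛ : ∀ z, π z ∈ Λ := fun z => (hπmem z).1
  have hπeq : ∀ z a, a ∈ gateSet A Λ z → π z = a :=
    fun z a haz => gate_unique hΛ (hπmem z) haz
  have hπid : ∀ z ∈ Λ, π z = z := by
    intro z hz
    exact hπeq z z ⟨hz, Walk.nil, by simp⟩
  have hconst : ∀ (g : G), g • Λ ≠ Λ → ∀ x ∈ g • Λ, ∀ y ∈ g • Λ, π x = π y := by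
    intro g hgΛ x hx y hy
    have hLlobe : IsLobe A (g • Λ) := lobe_smul hA g hΛ
    have hLconn : ConnOn A (g • Λ) := hLlobe.1.2.1
    have hsingle : ∀ p ∈ g • Λ, p ∈ Λ → ∀ q ∈ g • Λ, q ∈ Λ → p = q := by
      intro p hpL hpΛ q hqL hqΛ
      by_contra hpq
      exact hgΛ (lobe_eq_of_two_mem hLlobe hΛ hpL hpΛ hqL hqΛ hpq)
    by_cases hcap : ∃ c, c ∈ g • Λ ∧ c ∈ Λ
    · obtain ⟨c, hcL, hcΛ⟩ := hcap
      have hgate : ∀ t ∈ g • Λ, π t = c := by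
        intro t htL
        by_cases htΛ : t ∈ Λ
        · rw [hπid t htΛ]; exact hsingle t htL htΛ c hcL hcΛ
        · obtain ⟨wt, hwt⟩ := walk_of_chain htL ((connOn_def.mp hLconn) t htL c hcL)
          exact hπeq t c ⟨hcΛ, wt, fun s hs hsΛ => hsingle s (hwt s hs) hsΛ c hcL hcΛ⟩
      rw [hgate x hx, hgate y hy]
    · push_neg at hcap
      obtain ⟨hyΛ', wy, hwy⟩ := hπmem y
      obtain ⟨wxy, hwxy⟩ := walk_of_chain hx ((connOn_def.mp hLconn) x hx y hy)
      refine hπeq x (π y) ⟨hyΛ', wxy.append wy, ?_⟩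
      intro s hs hsΛ
      rw [Walk.mem_support_append_iff] at hs
      rcases hs with hs | hs
      · exact absurd hsΛ (hcap s (hwxy s hs))
      · exact hwy s hs hsΛ
  have hstep : ∀ x y, r x y → rel (π x) (π y) := by
    intro x y hxy
    rcases hxy with rfl | ⟨g, hx, hy, hr⟩
    · exact hrel.1 (π x) (hπΛ x)
    · by_cases hL : g • Λ = Λ
      · have hg : g ∈ MulAction.stabilizer G Λ := MulAction.mem_stabilizer_iff.mpr hL
        have hx' : g⁻¹ • x ∈ Λ := Set.mem_smul_set_iff_inv_smul_mem.mp hx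
        have hy' : g⁻¹ • y ∈ Λ := Set.mem_smul_set_iff_inv_smul_mem.mp hy
        have h2 := hinv g hg _ hx' _ hy' hr
        rw [smul_inv_smul, smul_inv_smul] at h2
        rw [hπid x (hL ▸ hx), hπid y (hL ▸ hy)]
        exact h2
      · rw [hconst g hL x hx y hy]
        exact hrel.1 (π y) (hπΛ y)
  have hrsymm : Symmetric r := by
    intro x y hxy
    rcases hxy with rfl | ⟨g, hx, hy, hr⟩
    · exact Or.inl rfl
    · exact Or.inr ⟨g, hy, hx,
        hrel.2.1 _ (Set.mem_smul_set_iff_inv_smul_mem.mp hx)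
          _ (Set.mem_smul_set_iff_inv_smul_mem.mp hy) hr⟩
  have hrinv : ∀ (k : G) (x y : V), r x y → r (k • x) (k • y) := by
    intro k x y hxy
    rcases hxy with rfl | ⟨g, hx, hy, hr⟩
    · exact Or.inl rfl
    · refine Or.inr ⟨k * g, ?_, ?_, ?_⟩
      · rw [mul_smul]; exact Set.smul_mem_smul_set hx
      · rw [mul_smul]; exact Set.smul_mem_smul_set hy
      · have e : (k*g)⁻¹ • (k • x) = g⁻¹ • x := by rw [mul_inv_rev, mul_smul, inv_smul_smul]
        have e2 : (k*g)⁻¹ • (k • y) = g⁻¹ • y := by rw [mul_inv_rev, mul_smul, inv_smul_smul]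
        rw [e, e2]; exact hr
  have huniv : ∀ x y : V, ReflTransGen r x y := by
    have hequiv : IsEquivRelOn Set.univ (ReflTransGen r) :=
      ⟨fun u _ => .refl, fun u _ v _ h => by haveI : Std.Symm r := ⟨fun _ _ h => hrsymm h⟩; exact Std.Symm.symm _ _ h,
       fun u _ v _ w _ h1 h2 => h1.trans h2⟩
    have hinv' : ∀ h ∈ (⊤ : Subgroup G), ∀ u ∈ (Set.univ : Set V), ∀ v ∈ (Set.univ : Set V),
        ReflTransGen r u v → ReflTransGen r (h • u) (h • v) := by
      intro h _ u _ v _ hc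
      exact ReflTransGen.lift (fun t => h • t) (fun a b hab => hrinv h a b hab) _ _ hc
    rcases hvprim.2 (ReflTransGen r) hequiv hinv' with htriv | hu
    · obtain ⟨u₀, hu₀, v₀, hv₀, hne, hr₀⟩ := hnt
      exfalso
      apply hne
      apply htriv u₀ (Set.mem_univ _) v₀ (Set.mem_univ _)
      refine ReflTransGen.single (Or.inr ⟨1, ?_, ?_, ?_⟩)
      · rw [one_smul]; exact hu₀
      · rw [one_smul]; exact hv₀
      · rw [inv_one, one_smul, one_smul]; exact hr₀
    · exact fun x y => hu x (Set.mem_univ _) y (Set.mem_univ _)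
  have hchain : ∀ x y : V, ReflTransGen r x y → rel (π x) (π y) := by
    intro x y h
    induction h with
    | refl => exact hrel.1 (π x) (hπΛ x)
    | @tail b c hab hbc ih =>
      exact hrel.2.2 _ (hπΛ x) _ (hπΛ b) _ (hπΛ c) ih (hstep b c hbc)
  intro u hu v hv
  have h := hchain u v (huniv u v)
  rwa [hπid u hu, hπid v hv] at h

end Aux6
section Aux7
open Relation
variable {V : Type*}

lemma exists_first_step {rr : V → V → Prop} {a b : V}
    (h : ReflTransGen rr a b) (hne : a ≠ b) : ∃ c, rr a c ∧ c ≠ a := by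
  induction h with
  | refl => exact absurd rfl hne
  | @tail m c hab hbc ih =>
    rcases eq_or_ne a m with rfl | hne2
    · exact ⟨c, hbc, fun h => hne h.symm⟩
    · exact ih hne2

lemma exists_nbr {A : V → V → Prop} {Λ : Set V}
    (hc : ConnOn A Λ) (hnt : Λ.Nontrivial) {u : V} (hu : u ∈ Λ) :
    ∃ v ∈ Λ, v ≠ u ∧ DigraphAdj A u v := by
  have ht' : ∃ t ∈ Λ, t ≠ u := by
    obtain ⟨a, ha, b, hb, hab⟩ := hnt
    rcases eq_or_ne a u with rfl | h
    · exact ⟨b, hb, hab.symm⟩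
    · exact ⟨a, ha, h⟩
  obtain ⟨t, ht, htu⟩ := ht'
  obtain ⟨v, hv, hvu⟩ := exists_first_step ((connOn_def.mp hc) u hu t ht) htu.symm
  exact ⟨v, hv.2.2, hvu, hv.1⟩

lemma exists_arc {A : V → V → Prop} {Λ : Set V} (hΛ2 : TwoConnOn A Λ) :
    ∃ x ∈ Λ, ∃ y ∈ Λ, x ≠ y ∧ A x y := by
  obtain ⟨a, ha, b, hb, hab⟩ := hΛ2.1
  obtain ⟨v, hvΛ, hvne, hadj⟩ := exists_nbr hΛ2.2.1 hΛ2.1 ha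
  rcases hadj with h | h
  · exact ⟨a, ha, v, hvΛ, hvne.symm, h⟩
  · exact ⟨v, hvΛ, a, ha, hvne, h⟩

end Aux7
theorem lobe_stabiliser_primitive'
    {V : Type*} {G : Type*} [Group G] [MulAction G V]
    (A : V → V → Prop)
    (hA : ∀ (g : G) (u v : V), A u v ↔ A (g • u) (g • v))
    (hvprim : PrimitiveOn (⊤ : Subgroup G) (Set.univ : Set V))
    (harctrans : ∀ u v u' v' : V, A u v → A u' v' → ∃ g : G, g • u = u' ∧ g • v = v')
    (hconn : ConnOn A Set.univ)
    (Λ : Set V) (hΛ : IsLobe A Λ)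
    (hthree : ∃ a b c : V, a ∈ Λ ∧ b ∈ Λ ∧ c ∈ Λ ∧ a ≠ b ∧ a ≠ c ∧ b ≠ c) :
    PrimitiveOn (MulAction.stabilizer G Λ) Λ := by
  set H := MulAction.stabilizer G Λ with hH
  -- the orbit relation of H on Λ
  set orel : V → V → Prop := fun u v => ∃ h ∈ H, h • u = v with horel
  have horel_equiv : IsEquivRelOn Λ orel := by
    refine ⟨fun u _ => ⟨1, one_mem _, one_smul _ _⟩, ?_, ?_⟩
    · rintro u _ v _ ⟨h, hh, rfl⟩
      exact ⟨h⁻¹, inv_mem hh, inv_smul_smul h u⟩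
    · rintro u _ v _ w _ ⟨h₁, hh₁, rfl⟩ ⟨h₂, hh₂, rfl⟩
      exact ⟨h₂ * h₁, mul_mem hh₂ hh₁, (mul_smul h₂ h₁ u)⟩
  have horel_inv : ∀ h ∈ H, ∀ u ∈ Λ, ∀ v ∈ Λ, orel u v → orel (h • u) (h • v) := by
    rintro h' hh' u _ v _ ⟨h, hh, rfl⟩
    refine ⟨h' * h * h'⁻¹, mul_mem (mul_mem hh' hh) (inv_mem hh'), ?_⟩
    rw [mul_smul, mul_smul, inv_smul_smul]
  -- membership of arcs: maps into stabilizer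
  have stab_of_two : ∀ (g : G) {p q : V}, p ∈ Λ → q ∈ Λ → p ∈ g • Λ → q ∈ g • Λ →
      p ≠ q → g ∈ H := by
    intro g p q hpΛ hqΛ hpL hqL hpq
    exact MulAction.mem_stabilizer_iff.mpr
      (lobe_eq_of_two_mem (lobe_smul hA g hΛ) hΛ hpL hpΛ hqL hqΛ hpq)
  obtain ⟨x, hx, y, hy, hxy, hAxy⟩ := exists_arc hΛ.1
  -- every vertex of Λ is in the H-orbit of x or of y
  have orbxy : ∀ u ∈ Λ, orel u x ∨ orel u y := by
    intro u hu
    obtain ⟨v, hvΛ, hvu, hadj⟩ := exists_nbr hΛ.1.2.1 hΛ.1.1 hu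
    rcases hadj with h | h
    · obtain ⟨g, hgu, hgv⟩ := harctrans u v x y h hAxy
      have hxL : x ∈ g • Λ := hgu ▸ Set.smul_mem_smul_set hu
      have hyL : y ∈ g • Λ := hgv ▸ Set.smul_mem_smul_set hvΛ
      exact Or.inl ⟨g, stab_of_two g hx hy hxL hyL hxy, hgu⟩
    · obtain ⟨g, hgv, hgu⟩ := harctrans v u x y h hAxy
      have hxL : x ∈ g • Λ := hgv ▸ Set.smul_mem_smul_set hvΛ
      have hyL : y ∈ g • Λ := hgu ▸ Set.smul_mem_smul_set hu
      exact Or.inr ⟨g, stab_of_two g hx hy hxL hyL hxy, hgu⟩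
  -- nontriviality of the orbit relation
  have pair : ∀ {p q t : V}, p ∈ Λ → q ∈ Λ → t ∈ Λ → orel p t → orel q t → orel p q := by
    intro p q t hp hq ht h1 h2
    exact horel_equiv.2.2 p hp t ht q hq h1 (horel_equiv.2.1 q hq t ht h2)
  have hnt : ∃ u ∈ Λ, ∃ v ∈ Λ, u ≠ v ∧ orel u v := by
    obtain ⟨a, b, c, ha, hb, hc, hab, hac, hbc⟩ := hthree
    rcases orbxy a ha with h₁ | h₁ <;> rcases orbxy b hb with h₂ | h₂ <;>
      rcases orbxy c hc with h₃ | h₃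
    · exact ⟨a, ha, b, hb, hab, pair ha hb hx h₁ h₂⟩
    · exact ⟨a, ha, b, hb, hab, pair ha hb hx h₁ h₂⟩
    · exact ⟨a, ha, c, hc, hac, pair ha hc hx h₁ h₃⟩
    · exact ⟨b, hb, c, hc, hbc, pair hb hc hy h₂ h₃⟩
    · exact ⟨b, hb, c, hc, hbc, pair hb hc hx h₂ h₃⟩
    · exact ⟨a, ha, c, hc, hac, pair ha hc hy h₁ h₃⟩
    · exact ⟨a, ha, b, hb, hab, pair ha hb hy h₁ h₂⟩
    · exact ⟨a, ha, b, hb, hab, pair ha hb hy h₁ h₂⟩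
  constructor
  · -- transitivity
    intro u hu v hv
    exact master_lemma hA hvprim hconn hΛ orel horel_equiv horel_inv hnt u hu v hv
  · -- primitivity
    intro r hr hrinv
    by_cases h : ∃ u ∈ Λ, ∃ v ∈ Λ, u ≠ v ∧ r u v
    · exact Or.inr (master_lemma hA hvprim hconn hΛ r hr hrinv h)
    · push_neg at h
      refine Or.inl ?_
      intro u hu v hv hruv
      by_contra hne
      exact h u hu v hv hne hruv

/-- Let `G` act vertex-primitively and arc-transitively on a
connectivity-one digraph `Γ` (with arc relation `A`), and let `Λ` be a lobe of `Γ`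
with at least three vertices. Then the setwise stabiliser of `Λ` (whose induced
permutations form the group of automorphisms of `Λ` induced by it) acts primitively
on the vertex set of `Λ`. -/
theorem lobe_stabiliser_primitive
    {V : Type*} {G : Type*} [Group G] [MulAction G V]
    (A : V → V → Prop)
    (hA : ∀ (g : G) (u v : V), A u v ↔ A (g • u) (g • v))
    (hvprim : PrimitiveOn (⊤ : Subgroup G) (Set.univ : Set V))
    (harctrans : ∀ u v u' v' : V, A u v → A u' v' → ∃ g : G, g • u = u' ∧ g • v = v')
    (hconn1 : ConnectivityOne A)
    (Λ : Set V) (hΛ : IsLobe A Λ)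
    (hthree : ∃ a b c : V, a ∈ Λ ∧ b ∈ Λ ∧ c ∈ Λ ∧ a ≠ b ∧ a ≠ c ∧ b ≠ c) :
    PrimitiveOn (MulAction.stabilizer G Λ) Λ := by
  exact lobe_stabiliser_primitive' A hA hvprim harctrans hconn1.1 Λ hΛ hthree
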